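/- Let 2 ≤ p < q and suppose that for each k ≥ 1 there exists an analytic polynomial-like building block as in the paper; concretely, given integers A ≥ A₀ and the functions g_N = b_{1/2}^N, the function f(z) = Σ_{k≥1} A^{k v_r} g_{A^k}(z) z^{A^k} (with r ∈ (p,q)\{4} and v_r as specified) is analytic in 𝔻 and satisfies min_{|z| = 1 − A^{−k}} |f(z)| ≳ A^{k v_r} → ∞ as k → ∞; in particular f is strongly annular. -/

import Mathlib

open Filter

/-- A function `f` analytic in the unit disc is strongly annular if
`limsup_{r→1⁻} min_{|z|=r} |f(z)| = ∞`. -/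
def StronglyAnnular (f : ℂ → ℂ) : Prop :=
  DifferentiableOn ℂ f (Metric.ball (0 : ℂ) 1) ∧
    ∀ M : ℝ, ∀ r₀ ∈ Set.Ico (0 : ℝ) 1, ∃ r : ℝ, r₀ < r ∧ r < 1 ∧
      ∀ z : ℂ, ‖z‖ = r → M ≤ ‖f z‖

/-- `v_r = 1/2 − 1/r` for `2 ≤ r < 4` and `v_r = 1/3 − 1/(3r)` for `r > 4`. -/
noncomputable def vExp (r : ℝ) : ℝ := if r < 4 then 1 / 2 - 1 / r else 1 / 3 - 1 / (3 * r)


section Stmt18Helpers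

open Filter Real

lemma stmt18aux_normSq_id (z : ℂ) : Complex.normSq (1 - z/2) - Complex.normSq (z - 1/2) = 3/4 * (1 - Complex.normSq z) := by
  simp [Complex.normSq_apply, Complex.sub_re, Complex.sub_im, Complex.div_re, Complex.div_im]
  ring

lemma stmt18aux_denom_lb {z : ℂ} (hz : ‖z‖ ≤ 1) : 1/2 ≤ ‖1 - z/2‖ := by
  have h1 : ‖z/2‖ ≤ 1/2 := by
    rw [norm_div]
    simp only [Complex.norm_ofNat]
    linarith
  have h2 : ‖(1:ℂ)‖ - ‖z/2‖ ≤ ‖1 - z/2‖ := norm_sub_norm_le _ _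
  simp only [norm_one] at h2
  linarith

lemma stmt18aux_abs_b_le_one {z : ℂ} (hz : ‖z‖ ≤ 1) :
    ‖(z - 1/2)/(1 - z/2)‖ ≤ 1 := by
  have hd := stmt18aux_denom_lb hz
  rw [norm_div, div_le_one (by linarith)]
  have hns : Complex.normSq z ≤ 1 := by
    rw [← Complex.sq_norm]; nlinarith [norm_nonneg z]
  have hid := stmt18aux_normSq_id z
  rw [Complex.norm_def, Complex.norm_def]
  apply Real.sqrt_le_sqrt
  nlinarith

lemma stmt18aux_sq_abs_b_lb {z : ℂ} (hz : ‖z‖ ≤ 1) :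
    1 - 6*(1 - ‖z‖) ≤ (‖(z - 1/2)/(1 - z/2)‖)^2 := by
  have hd := stmt18aux_denom_lb hz
  have h0 : (0:ℝ) ≤ ‖z‖ := norm_nonneg z
  have hD2 : (1:ℝ)/4 ≤ (‖1 - z/2‖)^2 := by nlinarith
  have hid := stmt18aux_normSq_id z
  rw [norm_div, div_pow, le_div_iff₀ (by nlinarith), Complex.sq_norm, Complex.sq_norm]
  have hns : Complex.normSq z = (‖z‖)^2 := (Complex.sq_norm z).symm
  rw [Complex.sq_norm] at hD2
  nlinarith [sq_nonneg (1 - ‖z‖)]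

lemma stmt18aux_exp_neg_le {t : ℝ} (h0 : 0 ≤ t) (h2 : t ≤ 1/2) : Real.exp (-(2*t)) ≤ 1 - t := by
  have stmt18aux_key : 1 ≤ (1 - t) * Real.exp (2*t) := by nlinarith [Real.add_one_le_exp (2*t)]
  have hm : Real.exp (-(2*t)) * Real.exp (2*t) = 1 := by rw [← Real.exp_add]; simp
  nlinarith [Real.exp_pos (2*t)]

lemma stmt18aux_pow_one_sub_ge {c : ℝ} {N : ℕ} (hc : 0 ≤ c) (h : c/N ≤ 1/2) (hN : 0 < N) :
    Real.exp (-(2*c)) ≤ (1 - c/N)^N := by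
  have hN0 : (N:ℝ) ≠ 0 := Nat.cast_ne_zero.2 hN.ne'
  have h1 : Real.exp (-(2*(c/N))) ≤ 1 - c/N := stmt18aux_exp_neg_le (by positivity) h
  calc Real.exp (-(2*c)) = (Real.exp (-(2*(c/N))))^N := by
        rw [← Real.exp_nat_mul]; congr 1; field_simp
    _ ≤ (1 - c/N)^N := pow_le_pow_left₀ (Real.exp_pos _).le h1 N

lemma stmt18aux_mul_le_pow_nat {A m : ℕ} (hA : 2 ≤ A) (hm : 1 ≤ m) : A * m ≤ A ^ m := by
  induction m with
  | zero => omega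
  | succ n ih =>
    rcases Nat.eq_or_lt_of_le hm with h | h
    · simp [← h]
    · have hn : 1 ≤ n := by omega
      have ih' := ih hn
      have h3 : n + 1 ≤ n * A := by
        calc n + 1 ≤ 2 * n := by omega
          _ ≤ A * n := Nat.mul_le_mul_right n hA
          _ = n * A := Nat.mul_comm A n
      calc A * (n+1) ≤ A * (n * A) := Nat.mul_le_mul_left A h3
        _ = (A * n) * A := by ring
        _ ≤ A ^ n * A := Nat.mul_le_mul_right A ih'
        _ = A ^ (n+1) := (pow_succ A n).symm

lemma stmt18aux_main_term {N : ℕ} (hN : 12 ≤ N) {z : ℂ} (hz : ‖z‖ = 1 - (N:ℝ)⁻¹) :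
    Real.exp (-8) ≤ ‖(z - 1/2)/(1 - z/2)‖^N * ‖z‖ ^ N := by
  have hNpos : (0:ℝ) < N := by positivity
  have hN12 : (12:ℝ) ≤ N := by exact_mod_cast hN
  have hinv : (N:ℝ)⁻¹ ≤ 1/12 := by
    rw [inv_le_comm₀ (by linarith) (by norm_num)]; linarith
  have hinv0 : 0 < (N:ℝ)⁻¹ := by positivity
  have hzle : ‖z‖ ≤ 1 := by rw [hz]; linarith
  -- |z|^N ≥ exp(-2)
  have h1 : Real.exp (-(2:ℝ)) ≤ ‖z‖ ^ N := by
    have := stmt18aux_pow_one_sub_ge (c := 1) (N := N) (by norm_num) (by rw [div_le_iff₀ hNpos]; linarith) (by omega)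
    rw [hz]
    calc Real.exp (-(2:ℝ)) = Real.exp (-(2*(1:ℝ))) := by norm_num
      _ ≤ (1 - 1/N)^N := this
      _ = (1 - (N:ℝ)⁻¹)^N := by rw [one_div]
  -- |b|^N ≥ exp(-6)
  set B := ‖(z - 1/2)/(1 - z/2)‖ with hB
  have hB0 : 0 ≤ B := norm_nonneg _
  have hb2 : 1 - 6*(N:ℝ)⁻¹ ≤ B^2 := by
    have := stmt18aux_sq_abs_b_lb hzle
    rw [hz] at this; convert this using 2; ring
  have hexp2 : Real.exp (-(2*(6/N))) ≤ 1 - 6*(N:ℝ)⁻¹ := by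
    have h := stmt18aux_exp_neg_le (t := 6/N) (by positivity) (by rw [div_le_iff₀ hNpos]; linarith)
    have heq : (6:ℝ)/N = 6*(N:ℝ)⁻¹ := by ring
    linarith [heq ▸ h]
  have hBN : Real.exp (-6) ≤ B^N := by
    have h2 : Real.exp (-12) ≤ (B^N)^2 := by
      have c1 : Real.exp (-(12:ℝ)) = (Real.exp (-(2*(6/N))))^N := by
        rw [← Real.exp_nat_mul]; congr 1; field_simp; ring
      calc Real.exp (-12) = (Real.exp (-(2*(6/N))))^N := c1
        _ ≤ (B^2)^N := pow_le_pow_left₀ (Real.exp_pos _).le (le_trans hexp2 hb2) N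
        _ = (B^N)^2 := by rw [← pow_mul, ← pow_mul, mul_comm]
    have hsq : (Real.exp (-6:ℝ))^2 = Real.exp (-12) := by
      rw [← Real.exp_nat_mul]; norm_num
    exact le_of_pow_le_pow_left₀ (by norm_num) (pow_nonneg hB0 N) (hsq ▸ h2)
  calc Real.exp (-8) = Real.exp (-6) * Real.exp (-(2:ℝ)) := by rw [← Real.exp_add]; norm_num
    _ ≤ B^N * ‖z‖ ^ N := by
        apply mul_le_mul hBN h1 (Real.exp_pos _).le (pow_nonneg hB0 N)

lemma stmt18aux_summable_major {A : ℕ} (hA : 2 ≤ A) {x ρ : ℝ} (hx : 0 ≤ x) (hρ0 : 0 ≤ ρ) (hρ1 : ρ < 1) :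
    Summable (fun j : ℕ => x^(j+1) * ρ^(A^(j+1))) := by
  apply summable_of_ratio_norm_eventually_le (r := 1/2) (by norm_num)
  have hto : Tendsto (fun n : ℕ => x * ρ^n) atTop (nhds 0) := by
    simpa using (tendsto_pow_atTop_nhds_zero_of_lt_one hρ0 hρ1).const_mul x
  filter_upwards [hto.eventually_lt_const (by norm_num : (0:ℝ) < 1/2)] with n hn
  have hE : A^(n+1) + n ≤ A^(n+2) := by
    have h1 : n < A ^ (n+1) := lt_of_lt_of_le (Nat.lt_pow_self (a := A) (n := n) (by omega)) (Nat.pow_le_pow_right (by omega) (by omega))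
    have h2 : A^(n+2) = A^(n+1) * A := pow_succ A (n+1)
    nlinarith
  have hr1 : ρ^(A^(n+2)) ≤ ρ^(A^(n+1)) * ρ^n := by
    rw [← pow_add]
    exact pow_le_pow_of_le_one hρ0 hρ1.le hE
  have hx2 : x^(n+2) = x * x^(n+1) := by ring
  rw [Real.norm_eq_abs, Real.norm_eq_abs, abs_of_nonneg (by positivity), abs_of_nonneg (by positivity)]
  calc x^(n+2) * ρ^(A^(n+2)) ≤ x^(n+2) * (ρ^(A^(n+1)) * ρ^n) := by
        apply mul_le_mul_of_nonneg_left hr1 (by positivity)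
    _ = (x * ρ^n) * (x^(n+1) * ρ^(A^(n+1))) := by ring
    _ ≤ 1/2 * (x^(n+1) * ρ^(A^(n+1))) := by
        apply mul_le_mul_of_nonneg_right hn.le (by positivity)

lemma stmt18aux_rpow_nat_mul_eq (A : ℕ) (v : ℝ) (k : ℕ) : (A:ℝ) ^ ((k:ℝ) * v) = ((A:ℝ)^v)^k := by
  rw [mul_comm, Real.rpow_mul (Nat.cast_nonneg A), Real.rpow_natCast]

lemma stmt18aux_coeff_eq (A : ℕ) (v : ℝ) (j : ℕ) : (A:ℝ) ^ (((j:ℝ)+1)*v) = ((A:ℝ)^v)^(j+1) := by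
  have h : ((j:ℝ)+1) = ((j+1 : ℕ):ℝ) := by push_cast; ring
  rw [h, stmt18aux_rpow_nat_mul_eq]

lemma stmt18aux_key (v : ℝ) (hv0 : 0 < v) (hv1 : v ≤ 1) (A : ℕ) (h12 : 12 ≤ A)
    (hxA : 1 + 2*Real.exp 9 ≤ (A:ℝ)^v)
    (hyA : (A:ℝ)*Real.exp (-(A:ℝ)) ≤ Real.exp (-9)/4)
    (k : ℕ) (hk : 1 ≤ k) (z : ℂ) (hz : ‖z‖ = 1 - ((A : ℝ))⁻¹ ^ k) :
    Real.exp (-9) * (A:ℝ) ^ ((k:ℝ) * v)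
      ≤ ‖∑' j : ℕ,
          (((A : ℝ) ^ (((j : ℝ) + 1) * v) : ℝ) : ℂ)
            * ((z - 1 / 2) / (1 - z / 2)) ^ (A ^ (j + 1)) * z ^ (A ^ (j + 1))‖ := by
  have hA2 : 2 ≤ A := by omega
  have hA1R : (1:ℝ) ≤ A := by exact_mod_cast (by omega : 1 ≤ A)
  set x := (A:ℝ)^v with hxdef
  have hx0 : 0 ≤ x := Real.rpow_nonneg (Nat.cast_nonneg A) v
  have hx1 : 1 < x := by nlinarith [Real.exp_pos 9]
  set N := A ^ k with hNdef
  have hNge : 12 ≤ N := le_trans h12 (Nat.le_self_pow (by omega) A)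
  have hNposR : (0:ℝ) < N := by positivity
  have hNcast : ((N:ℕ):ℝ) = (A:ℝ)^k := by push_cast [hNdef]; ring
  have hzabs : ‖z‖ = 1 - (N:ℝ)⁻¹ := by
    rw [hz, hNcast, ← inv_pow]
  have hinvN : 0 < (N:ℝ)⁻¹ := by positivity
  have hinvN2 : (N:ℝ)⁻¹ ≤ 1/12 := by
    rw [inv_le_comm₀ hNposR (by norm_num)]
    norm_num; exact_mod_cast hNge
  have hzlt1 : ‖z‖ < 1 := by rw [hzabs]; linarith
  have hzle1 : ‖z‖ ≤ 1 := hzlt1.le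
  have hz0 : 0 ≤ ‖z‖ := norm_nonneg z
  set b := (z - 1/2)/(1 - z/2) with hbdef
  have hb1 : ‖b‖ ≤ 1 := stmt18aux_abs_b_le_one hzle1
  have hb0 : 0 ≤ ‖b‖ := norm_nonneg _
  set F : ℕ → ℂ := fun j =>
    (((A : ℝ) ^ (((j : ℝ) + 1) * v) : ℝ) : ℂ) * b ^ (A ^ (j + 1)) * z ^ (A ^ (j + 1)) with hFdef
  have habsF : ∀ j, ‖F j‖
      = x^(j+1) * (‖b‖)^(A^(j+1)) * (‖z‖)^(A^(j+1)) := by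
    intro j
    simp only [hFdef, norm_mul, norm_pow, Complex.norm_real, Real.norm_eq_abs, stmt18aux_coeff_eq]
    rw [abs_of_nonneg (by positivity)]
  set u : ℕ → ℝ := fun j => x^(j+1) * (‖z‖)^(A^(j+1)) with hudef
  have hFu : ∀ j, ‖F j‖ ≤ u j := by
    intro j
    rw [habsF]
    have : (‖b‖)^(A^(j+1)) ≤ 1 := pow_le_one₀ hb0 hb1
    calc x^(j+1) * (‖b‖)^(A^(j+1)) * (‖z‖)^(A^(j+1))
        ≤ x^(j+1) * 1 * (‖z‖)^(A^(j+1)) := by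
          apply mul_le_mul_of_nonneg_right (mul_le_mul_of_nonneg_left this (by positivity)) (by positivity)
      _ = u j := by rw [hudef]; ring
  have hsumu : Summable u := stmt18aux_summable_major hA2 hx0 hz0 hzlt1
  have hsumF : Summable F := by
    apply Summable.of_norm
    exact Summable.of_nonneg_of_le (fun j => norm_nonneg _) (fun j => by
      exact hFu j) hsumu
  -- main term
  have hk1 : k - 1 + 1 = k := Nat.succ_pred_eq_of_pos hk
  have hmain : Real.exp (-8) * x^k ≤ ‖F (k-1)‖ := by
    rw [habsF, hk1]
    have h := stmt18aux_main_term hNge hzabs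
    calc Real.exp (-8) * x^k
        ≤ ((‖b‖)^N * (‖z‖)^N) * x^k := by
          apply mul_le_mul_of_nonneg_right h (by positivity)
      _ = x^k * (‖b‖)^(A^k) * (‖z‖)^(A^k) := by rw [← hNdef]; ring
  -- the rest of the series
  classical
  set g : ℕ → ℝ := fun j => ‖if j = k-1 then (0:ℂ) else F j‖ with hgdef
  have hgle : ∀ j, g j ≤ u j := by
    intro j
    by_cases h : j = k-1
    · have hz' : g j = 0 := by simp [hgdef, h]
      rw [hz']
      show (0:ℝ) ≤ x^(j+1) * (‖z‖)^(A^(j+1))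
      positivity
    · simp only [hgdef, if_neg h]
      exact hFu j
  have hg0 : ∀ j, 0 ≤ g j := fun j => norm_nonneg _
  have hsumg : Summable g := Summable.of_nonneg_of_le hg0 hgle hsumu
  -- tail bound
  set y := (A:ℝ)*Real.exp (-(A:ℝ)) with hydef
  have hy0 : 0 ≤ y := by positivity
  have hexp9 : Real.exp (-9:ℝ) < 1 := by
    rw [show (1:ℝ) = Real.exp 0 by simp]
    exact Real.exp_lt_exp.2 (by norm_num)
  have hy12 : y ≤ 1/2 := by nlinarith
  have hy1 : y < 1 := by linarith
  have htail_term : ∀ i : ℕ, g (i + k) ≤ x^k * y^(i+1) := by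
    intro i
    have hne : i + k ≠ k - 1 := by omega
    rw [hgdef]
    simp only [if_neg hne]
    refine (hFu _).trans ?_
    rw [hudef]
    -- u (i+k) = x^(i+k+1) * |z|^(A^(i+k+1))
    have hρe : ‖z‖ ≤ Real.exp (-(N:ℝ)⁻¹) := by
      rw [hzabs]
      linarith [Real.add_one_le_exp (-(N:ℝ)⁻¹)]
    have h1 : (‖z‖)^(A^(i+k+1)) ≤ Real.exp (-((A:ℝ)^(i+1))) := by
      calc (‖z‖)^(A^(i+k+1)) ≤ (Real.exp (-(N:ℝ)⁻¹))^(A^(i+k+1)) :=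
            pow_le_pow_left₀ hz0 hρe _
        _ = Real.exp ((A^(i+k+1) : ℕ) * (-(N:ℝ)⁻¹)) := by rw [Real.exp_nat_mul]
        _ = Real.exp (-((A:ℝ)^(i+1))) := by
            congr 1
            push_cast
            rw [hNcast]
            have hAk : (A:ℝ)^k ≠ 0 := by positivity
            field_simp
            ring
    have h2 : x^(i+1) ≤ (A:ℝ)^(i+1) := by
      apply pow_le_pow_left₀ hx0
      calc x = (A:ℝ)^v := rfl
        _ ≤ (A:ℝ)^(1:ℝ) := Real.rpow_le_rpow_of_exponent_le hA1R hv1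
        _ = (A:ℝ) := Real.rpow_one _
    have h3 : Real.exp (-((A:ℝ)^(i+1))) ≤ Real.exp (-((A:ℝ)*(i+1))) := by
      apply Real.exp_le_exp.2
      apply neg_le_neg
      have := stmt18aux_mul_le_pow_nat hA2 (show 1 ≤ i+1 by omega)
      exact_mod_cast this
    have h4 : Real.exp (-((A:ℝ)*(i+1))) = (Real.exp (-(A:ℝ)))^(i+1) := by
      rw [← Real.exp_nat_mul]
      congr 1
      push_cast
      ring
    calc x^(i+k+1) * (‖z‖)^(A^(i+k+1))
        ≤ x^(i+k+1) * Real.exp (-((A:ℝ)^(i+1))) := by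
          apply mul_le_mul_of_nonneg_left h1 (by positivity)
      _ = x^k * (x^(i+1) * Real.exp (-((A:ℝ)^(i+1)))) := by ring
      _ ≤ x^k * ((A:ℝ)^(i+1) * Real.exp (-((A:ℝ)*(i+1)))) := by
          apply mul_le_mul_of_nonneg_left ?_ (by positivity)
          exact mul_le_mul h2 h3 (Real.exp_pos _).le (by positivity)
      _ = x^k * y^(i+1) := by rw [h4, hydef, mul_pow]
  have htailsummand : Summable (fun i => g (i + k)) := (summable_nat_add_iff k).2 hsumg
  have hgeo : Summable (fun i : ℕ => x^k * y^(i+1)) := by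
    apply Summable.mul_left
    have := (summable_geometric_of_lt_one hy0 hy1)
    exact (summable_nat_add_iff 1).2 this
  have htail : ∑' i, g (i + k) ≤ x^k * (Real.exp (-9)/2) := by
    have h5 : ∑' i, g (i + k) ≤ ∑' i : ℕ, x^k * y^(i+1) :=
      Summable.tsum_le_tsum htail_term htailsummand hgeo
    have h6 : ∑' i : ℕ, x^k * y^(i+1) = x^k * (y * (1-y)⁻¹) := by
      rw [tsum_mul_left]
      congr 1
      have : ∀ i : ℕ, y^(i+1) = y * y^i := fun i => by ring
      rw [tsum_congr this, tsum_mul_left, tsum_geometric_of_lt_one hy0 hy1]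
    have h7 : (1-y)⁻¹ ≤ 2 := by
      rw [inv_le_comm₀ (by linarith) (by norm_num)]
      linarith
    have h8 : y * (1-y)⁻¹ ≤ Real.exp (-9)/2 := by
      calc y * (1-y)⁻¹ ≤ y * 2 := by
            apply mul_le_mul_of_nonneg_left h7 hy0
        _ ≤ Real.exp (-9)/2 := by nlinarith
      -- y ≤ exp(-9)/4
    calc ∑' i, g (i + k) ≤ ∑' i : ℕ, x^k * y^(i+1) := h5
      _ = x^k * (y * (1-y)⁻¹) := h6
      _ ≤ x^k * (Real.exp (-9)/2) := by
          apply mul_le_mul_of_nonneg_left h8 (by positivity)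
  -- finite-sum bound
  have hhead : ∑ j ∈ Finset.range k, g j ≤ x^k * (Real.exp (-9)/2) := by
    have hsum_eq : ∑ j ∈ Finset.range k, g j ≤ ∑ j ∈ Finset.range (k-1), x^(j+1) := by
      rw [← hk1, Finset.sum_range_succ]
      have hz1 : g (k-1) = 0 := by simp [hgdef]
      rw [hz1, add_zero]
      apply Finset.sum_le_sum
      intro j hj
      have hjne : j ≠ k - 1 := by
        have := Finset.mem_range.1 hj; omega
      refine (hgle j).trans ?_
      rw [hudef]
      calc x^(j+1) * (‖z‖)^(A^(j+1)) ≤ x^(j+1) * 1 := by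
            apply mul_le_mul_of_nonneg_left (pow_le_one₀ hz0 hzle1) (by positivity)
        _ = x^(j+1) := mul_one _
    have hsum_pow : ∑ j ∈ Finset.range (k-1), x^(j+1)
        = (∑ j ∈ Finset.range (k-1), x^j) * x := by
      rw [Finset.sum_mul]
      apply Finset.sum_congr rfl
      intro j _
      rw [pow_succ]
    have hgeom : (∑ j ∈ Finset.range (k-1), x^(j+1)) * (x - 1) = x^k - x := by
      rw [hsum_pow]
      have h := geom_sum_mul x (k-1)
      calc (∑ j ∈ Finset.range (k-1), x^j) * x * (x - 1)
          = ((∑ j ∈ Finset.range (k-1), x^j) * (x-1)) * x := by ring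
        _ = (x^(k-1) - 1) * x := by rw [h]
        _ = x^(k-1) * x - x := by ring
        _ = x^k - x := by rw [← pow_succ, hk1]
    have hx1' : (0:ℝ) < x - 1 := by linarith
    have hE : Real.exp (-9:ℝ) * Real.exp 9 = 1 := by rw [← Real.exp_add]; norm_num
    have hxk : x ≤ x^k := le_self_pow₀ hx1.le (by omega)
    have hS : (∑ j ∈ Finset.range (k-1), x^(j+1)) ≤ x^k * (Real.exp (-9)/2) := by
      apply le_of_mul_le_mul_right ?_ hx1'
      rw [hgeom]
      have hstep : x^k * (Real.exp (-9)/2) * (2*Real.exp 9)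
          ≤ x^k * (Real.exp (-9)/2) * (x-1) :=
        mul_le_mul_of_nonneg_left (by linarith) (by positivity)
      have hstep2 : x^k * (Real.exp (-9)/2) * (2*Real.exp 9) = x^k := by
        calc x^k * (Real.exp (-9)/2) * (2*Real.exp 9)
            = x^k * (Real.exp (-9) * Real.exp 9) := by ring
          _ = x^k := by rw [hE, mul_one]
      linarith
    exact hsum_eq.trans hS
  -- conclusion
  have hsplit := Summable.tsum_eq_add_tsum_ite hsumF (k-1)
  rw [stmt18aux_rpow_nat_mul_eq A v k, ← hxdef]
  rw [hsplit]
  set T := ∑' (n : ℕ), if n = k-1 then (0:ℂ) else F n with hTdef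
  have hTle : ‖T‖ ≤ x^k * Real.exp (-9) := by
    refine (norm_tsum_le_tsum_norm hsumg).trans ?_
    rw [← Summable.sum_add_tsum_nat_add k hsumg]
    linarith
  have habs_ge : ‖F (k-1)‖ - ‖T‖ ≤ ‖F (k-1) + T‖ := by
    have h := norm_sub_le (F (k-1) + T) T
    simp only [add_sub_cancel_right] at h
    linarith
  have hE1 : Real.exp (-8:ℝ) = Real.exp (-9) * Real.exp 1 := by
    rw [← Real.exp_add]; norm_num
  have he1 : (2:ℝ) ≤ Real.exp 1 := by linarith [Real.add_one_le_exp 1]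
  have hxk0 : (0:ℝ) ≤ x^k := pow_nonneg hx0 k
  have hfinal : 2 * Real.exp (-9) ≤ Real.exp (-8) := by
    rw [hE1]
    have h2 := mul_le_mul_of_nonneg_left he1 (Real.exp_pos (-9:ℝ)).le
    linarith
  have hfinal2 : 2 * Real.exp (-9) * x^k ≤ Real.exp (-8) * x^k :=
    mul_le_mul_of_nonneg_right hfinal hxk0
  linarith [hmain, hTle, habs_ge, hfinal2]

lemma stmt18aux_diffOn (A : ℕ) (hA : 2 ≤ A) (v : ℝ) :
    DifferentiableOn ℂ
      (fun z : ℂ => ∑' j : ℕ,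
        (((A : ℝ) ^ (((j : ℝ) + 1) * v) : ℝ) : ℂ)
          * ((z - 1 / 2) / (1 - z / 2)) ^ (A ^ (j + 1)) * z ^ (A ^ (j + 1)))
      (Metric.ball (0 : ℂ) 1) := by
  intro z₀ hz₀
  have hz₀1 : ‖z₀‖ < 1 := by
    simpa [Complex.dist_eq] using hz₀
  have h0 : 0 ≤ ‖z₀‖ := norm_nonneg z₀
  set ρ := (‖z₀‖ + 1)/2 with hρdef
  have hρ0 : 0 ≤ ρ := by positivity
  have hρ1 : ρ < 1 := by rw [hρdef]; linarith
  have hmem : z₀ ∈ Metric.ball (0:ℂ) ρ := by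
    simp only [Metric.mem_ball, Complex.dist_eq, sub_zero]
    rw [hρdef]; linarith
  have hball : DifferentiableOn ℂ
      (fun z : ℂ => ∑' j : ℕ,
        (((A : ℝ) ^ (((j : ℝ) + 1) * v) : ℝ) : ℂ)
          * ((z - 1 / 2) / (1 - z / 2)) ^ (A ^ (j + 1)) * z ^ (A ^ (j + 1)))
      (Metric.ball (0 : ℂ) ρ) := by
    apply Complex.differentiableOn_tsum_of_summable_norm
      (u := fun j => ((A:ℝ)^v)^(j+1) * ρ^(A^(j+1)))
    · exact stmt18aux_summable_major hA (Real.rpow_nonneg (Nat.cast_nonneg A) v) hρ0 hρ1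
    · intro i
      apply DifferentiableOn.mul
      apply DifferentiableOn.mul
      · exact differentiableOn_const _
      · apply DifferentiableOn.pow
        apply DifferentiableOn.div
        · exact (differentiable_id.sub_const _).differentiableOn
        · exact ((differentiable_id.div_const _).const_sub _).differentiableOn
        · intro w hw
          have hw1 : ‖w‖ < 1 := by
            have : ‖w‖ < ρ := by simpa [Complex.dist_eq] using hw
            linarith
          intro hcon
          have : w = 2 := by
            field_simp at hcon
            linear_combination -hcon
          rw [this] at hw1
          norm_num at hw1
      · exact (differentiable_pow _).differentiableOn
    · exact Metric.isOpen_ball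
    · intro i w hw
      have hwρ : ‖w‖ ≤ ρ := by
        have : ‖w‖ < ρ := by simpa [Complex.dist_eq] using hw
        linarith
      have hw1 : ‖w‖ ≤ 1 := le_trans hwρ hρ1.le
      have hb := stmt18aux_abs_b_le_one hw1
      simp only [norm_mul, norm_pow, Complex.norm_real, Real.norm_eq_abs, stmt18aux_coeff_eq]
      rw [abs_of_nonneg (by positivity : (0:ℝ) ≤ (A:ℝ)^v)]
      have h1 : ‖(w - 1/2)/(1 - w/2)‖ ^ (A^(i+1)) ≤ 1 :=
        pow_le_one₀ (norm_nonneg _) hb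
      have h2 : ‖w‖ ^ (A^(i+1)) ≤ ρ^(A^(i+1)) :=
        pow_le_pow_left₀ (norm_nonneg _) hwρ _
      calc ((A:ℝ)^v)^(i+1) * ‖(w - 1/2)/(1 - w/2)‖ ^ (A^(i+1)) * ‖w‖ ^ (A^(i+1))
          ≤ ((A:ℝ)^v)^(i+1) * 1 * ρ^(A^(i+1)) := by
            apply mul_le_mul (mul_le_mul_of_nonneg_left h1 (by positivity)) h2 (by positivity) (by positivity)
        _ = ((A:ℝ)^v)^(i+1) * ρ^(A^(i+1)) := by ring
  exact ((hball.differentiableAt (Metric.isOpen_ball.mem_nhds hmem)).differentiableWithinAt)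

end Stmt18Helpers

/-- The Blaschke block `g_N(z) z^N`-based series: for `2 ≤ p < q`, `r ∈ (p,q) \ {4}`, and
integers `A ≥ A₀`, the function `f(z) = Σ_{k≥1} A^{k v_r} g_{A^k}(z) z^{A^k}` is
analytic in `𝔻`, satisfies `min_{|z|=1−A^{−k}} |f| ≳ A^{k v_r} → ∞` as `k → ∞`;
in particular `f` is strongly annular. -/
theorem stmt18 (p q r : ℝ) (hp : 2 ≤ p) (hpq : p < q) (hr : r ∈ Set.Ioo p q)
    (hr4 : r ≠ 4) :
    ∃ A₀ : ℕ, ∀ A : ℕ, A₀ ≤ A →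
      DifferentiableOn ℂ
        (fun z : ℂ => ∑' k : ℕ,
          (((A : ℝ) ^ (((k : ℝ) + 1) * vExp r) : ℝ) : ℂ)
            * ((z - 1 / 2) / (1 - z / 2)) ^ (A ^ (k + 1)) * z ^ (A ^ (k + 1)))
        (Metric.ball (0 : ℂ) 1)
      ∧ (∃ c : ℝ, 0 < c ∧ ∀ k : ℕ, 1 ≤ k → ∀ z : ℂ,
          ‖z‖ = 1 - ((A : ℝ))⁻¹ ^ k →
            c * (A : ℝ) ^ ((k : ℝ) * vExp r)
              ≤ ‖(∑' j : ℕ,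
                  (((A : ℝ) ^ (((j : ℝ) + 1) * vExp r) : ℝ) : ℂ)
                    * ((z - 1 / 2) / (1 - z / 2)) ^ (A ^ (j + 1)) * z ^ (A ^ (j + 1)))‖)
      ∧ Tendsto (fun k : ℕ => (A : ℝ) ^ ((k : ℝ) * vExp r)) atTop atTop
      ∧ StronglyAnnular
          (fun z : ℂ => ∑' k : ℕ,
            (((A : ℝ) ^ (((k : ℝ) + 1) * vExp r) : ℝ) : ℂ)
              * ((z - 1 / 2) / (1 - z / 2)) ^ (A ^ (k + 1)) * z ^ (A ^ (k + 1))) := by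
  have hr2 : 2 < r := lt_of_le_of_lt hp hr.1
  set v := vExp r with hvdef
  have hv0 : 0 < v := by
    rw [hvdef, vExp]
    split_ifs with h
    · have : 1/r < 1/2 := by
        rw [div_lt_div_iff₀ (by linarith) (by norm_num)]
        linarith
      linarith
    · have hrge : (4:ℝ) ≤ r := not_lt.1 h
      have : 1/(3*r) ≤ 1/12 := by
        apply one_div_le_one_div_of_le (by norm_num)
        linarith
      linarith
  have hv1 : v ≤ 1 := by
    rw [hvdef, vExp]
    split_ifs with h
    · have : 0 < 1/r := by positivity
      linarith
    · have hrge : (4:ℝ) ≤ r := not_lt.1 h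
      have : 0 < 1/(3*r) := by positivity
      linarith
  -- eventual conditions on A
  have e1 : ∀ᶠ A : ℕ in atTop, 12 ≤ A := eventually_ge_atTop 12
  have e2 : ∀ᶠ A : ℕ in atTop, 1 + 2*Real.exp 9 ≤ (A:ℝ)^v := by
    have ht : Tendsto (fun A : ℕ => ((A:ℝ))^v) atTop atTop :=
      (tendsto_rpow_atTop hv0).comp tendsto_natCast_atTop_atTop
    exact ht.eventually_ge_atTop _
  have e3 : ∀ᶠ A : ℕ in atTop, (A:ℝ)*Real.exp (-(A:ℝ)) ≤ Real.exp (-9)/4 := by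
    have ht : Tendsto (fun A : ℕ => (A:ℝ)*Real.exp (-(A:ℝ))) atTop (nhds 0) := by
      have h := (Real.tendsto_pow_mul_exp_neg_atTop_nhds_zero 1).comp tendsto_natCast_atTop_atTop
      simpa [Function.comp_def] using h
    exact (ht.eventually_lt_const (by positivity)).mono fun A h => h.le
  obtain ⟨A₀, hA₀⟩ := eventually_atTop.mp (e1.and (e2.and e3))
  refine ⟨A₀, fun A hA => ?_⟩
  obtain ⟨h12, hxA, hyA⟩ := hA₀ A hA
  have hA2 : 2 ≤ A := by omega
  have hAR1 : (1:ℝ) < A := by exact_mod_cast (by omega : 1 < A)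
  have hx1 : 1 < (A:ℝ)^v := by nlinarith [Real.exp_pos 9]
  have hdiff := stmt18aux_diffOn A hA2 v
  have htendsto : Tendsto (fun k : ℕ => (A : ℝ) ^ ((k : ℝ) * v)) atTop atTop := by
    have h := tendsto_pow_atTop_atTop_of_one_lt hx1
    refine h.congr fun k => ?_
    rw [stmt18aux_rpow_nat_mul_eq]
  refine ⟨hdiff, ⟨Real.exp (-9), Real.exp_pos _, fun k hk z hz => stmt18aux_key v hv0 hv1 A h12 hxA hyA k hk z hz⟩, htendsto, hdiff, ?_⟩
  -- strongly annular, second component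
  intro M r₀ hr₀
  have hr₀1 : r₀ < 1 := hr₀.2
  have hinv1 : (A:ℝ)⁻¹ < 1 := by
    rw [inv_lt_one_iff₀]; right; exact hAR1
  have hinv0 : 0 < (A:ℝ)⁻¹ := by positivity
  have ht1 : Tendsto (fun k : ℕ => ((A:ℝ)⁻¹)^k) atTop (nhds 0) :=
    tendsto_pow_atTop_nhds_zero_of_lt_one hinv0.le hinv1
  have ht2 : Tendsto (fun k : ℕ => Real.exp (-9) * ((A:ℝ)^v)^k) atTop atTop := by
    apply Tendsto.const_mul_atTop (Real.exp_pos _)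
    exact tendsto_pow_atTop_atTop_of_one_lt hx1
  have ev1 : ∀ᶠ k : ℕ in atTop, ((A:ℝ)⁻¹)^k < 1 - r₀ :=
    ht1.eventually_lt_const (by linarith)
  have ev2 : ∀ᶠ k : ℕ in atTop, M ≤ Real.exp (-9) * ((A:ℝ)^v)^k :=
    ht2.eventually_ge_atTop M
  have ev3 : ∀ᶠ k : ℕ in atTop, 1 ≤ k := eventually_ge_atTop 1
  obtain ⟨k, hk1, hk2, hk3⟩ := ((ev1.and (ev2.and ev3)).exists)
  refine ⟨1 - ((A:ℝ)⁻¹)^k, by linarith, by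
    have : 0 < ((A:ℝ)⁻¹)^k := pow_pos hinv0 k
    linarith, ?_⟩
  intro z hz
  have hkey := stmt18aux_key v hv0 hv1 A h12 hxA hyA k hk3 z hz
  rw [stmt18aux_rpow_nat_mul_eq] at hkey
  exact le_trans hk2 hkey
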